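/- In the stage game generalized-rock-paper-scissors-with-duds with m even, the mixed strategy for player 1 that randomizes uniformly over the set of nonduds i with f(i) even guarantees expected utility ≥ 0 against every opponent action a₂ (expected utility exactly 0 if a₂ is a nondud, and 1 if a₂ is a dud); hence it is a maximin strategy. -/
import Mathlib


lemma mod_inj' (m a b : ℕ) (hm : 0 < m) (ha : 1 ≤ a) (ha' : a ≤ m) (hb : 1 ≤ b) (hb' : b ≤ m)
    (h : a % m = b % m) : a = b := by
  rcases eq_or_lt_of_le ha' with rfl | ha' <;> rcases eq_or_lt_of_le hb' with h2 | hb'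
  · omega
  · rw [Nat.mod_self, Nat.mod_eq_of_lt hb'] at h; omega
  · subst h2; rw [Nat.mod_self, Nat.mod_eq_of_lt ha'] at h; omega
  · rw [Nat.mod_eq_of_lt ha', Nat.mod_eq_of_lt hb'] at h; exact h

lemma noPQ (m x y : ℕ) (hm : 2 < m) (hP : x % m = (y+1) % m) (hQ : y % m = (x+1) % m) :
    False := by
  have h1 : x ≡ y + 1 [MOD m] := hP
  have h2 : y ≡ x + 1 [MOD m] := hQ
  have h3 : x ≡ x + 2 [MOD m] := h1.trans (by simpa [add_assoc] using h2.add_right 1)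
  have h4 := (Nat.modEq_iff_dvd' (by omega)).mp h3
  have h5 : m ∣ 2 := by simpa using h4
  have := Nat.le_of_dvd (by norm_num) h5
  omega


/-- In generalized-rock-paper-scissors-with-duds with permutation `f`, an action `i` is a
*dud* iff `m + 1 ≤ f i`; nonduds are the actions `i` with `f i ≤ m`. Player 1's utility
for the action pair `(a₁, a₂)`: if exactly one player plays a dud, that player loses;
if neither plays a dud and `f aᵢ ≡ f a₋ᵢ + 1 (mod m)` then player `i` wins; otherwise
the round is a draw. The winner gets `1`, the loser `-1`, a draw gives `0`. -/
def rpsU (m : ℕ) (f : ℕ → ℕ) (a₁ a₂ : ℕ) : ℤ :=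
  if m + 1 ≤ f a₁ ∧ ¬(m + 1 ≤ f a₂) then -1
  else if m + 1 ≤ f a₂ ∧ ¬(m + 1 ≤ f a₁) then 1
  else if ¬(m + 1 ≤ f a₁) ∧ ¬(m + 1 ≤ f a₂) ∧ f a₁ % m = (f a₂ + 1) % m then 1
  else if ¬(m + 1 ≤ f a₁) ∧ ¬(m + 1 ≤ f a₂) ∧ f a₂ % m = (f a₁ + 1) % m then -1
  else 0

/-- In the stage game generalized-rock-paper-scissors-with-duds with `m` even, the mixed
strategy for player 1 that randomizes uniformly over the set of nonduds `i` with `f i`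
even guarantees expected utility `≥ 0` against every opponent action `a₂` (expected
utility exactly `0` if `a₂` is a nondud, and `1` if `a₂` is a dud); hence it is a
maximin strategy. -/
theorem stmt9 (m n : ℕ) (hm : 2 < m) (hmeven : m % 2 = 0) (f : ℕ → ℕ)
    (hf : Set.BijOn f (Set.Icc 1 (m + n)) (Set.Icc 1 (m + n))) :
    ∀ a₂ ∈ Finset.Icc 1 (m + n),
      0 ≤ (∑ a₁ ∈ (Finset.Icc 1 (m + n)).filter (fun i => f i ≤ m ∧ f i % 2 = 0),
              (rpsU m f a₁ a₂ : ℝ)) /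
            (((Finset.Icc 1 (m + n)).filter (fun i => f i ≤ m ∧ f i % 2 = 0)).card : ℝ) ∧
      (f a₂ ≤ m →
        (∑ a₁ ∈ (Finset.Icc 1 (m + n)).filter (fun i => f i ≤ m ∧ f i % 2 = 0),
              (rpsU m f a₁ a₂ : ℝ)) /
            (((Finset.Icc 1 (m + n)).filter (fun i => f i ≤ m ∧ f i % 2 = 0)).card : ℝ) = 0) ∧
      (m + 1 ≤ f a₂ →
        (∑ a₁ ∈ (Finset.Icc 1 (m + n)).filter (fun i => f i ≤ m ∧ f i % 2 = 0),
              (rpsU m f a₁ a₂ : ℝ)) /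
            (((Finset.Icc 1 (m + n)).filter (fun i => f i ≤ m ∧ f i % 2 = 0)).card : ℝ) = 1) := by
  intro a₂ ha₂
  rw [Finset.mem_Icc] at ha₂
  set S := (Finset.Icc 1 (m + n)).filter (fun i => f i ≤ m ∧ f i % 2 = 0) with hSdef
  set T := (Finset.Icc 1 m).filter (fun e => e % 2 = 0) with hTdef
  have hfa₂ : 1 ≤ f a₂ ∧ f a₂ ≤ m + n := by
    have := hf.mapsTo (Set.mem_Icc.mpr ⟨ha₂.1, ha₂.2⟩)
    rwa [Set.mem_Icc] at this
  have himg : S.image f = T := by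
    ext e
    simp only [hSdef, hTdef, Finset.mem_image, Finset.mem_filter, Finset.mem_Icc]
    constructor
    · rintro ⟨i, ⟨⟨hi1, hi2⟩, hle, hev⟩, rfl⟩
      have := hf.mapsTo (Set.mem_Icc.mpr ⟨hi1, hi2⟩)
      rw [Set.mem_Icc] at this
      exact ⟨⟨this.1, hle⟩, hev⟩
    · rintro ⟨⟨he1, he2⟩, hev⟩
      obtain ⟨i, hi, rfl⟩ := hf.surjOn (Set.mem_Icc.mpr ⟨he1, by omega⟩)
      rw [Set.mem_Icc] at hi
      exact ⟨i, ⟨⟨hi.1, hi.2⟩, he2, hev⟩, rfl⟩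
  have hinjS : ∀ x ∈ S, ∀ y ∈ S, f x = f y → x = y := by
    intro x hx y hy hxy
    simp only [hSdef, Finset.mem_filter, Finset.mem_Icc] at hx hy
    exact hf.injOn (Set.mem_Icc.mpr ⟨hx.1.1, hx.1.2⟩) (Set.mem_Icc.mpr ⟨hy.1.1, hy.1.2⟩) hxy
  have hcard : S.card = T.card := by
    rw [← himg]; exact (Finset.card_image_of_injOn (fun x hx y hy => hinjS x hx y hy)).symm
  have hTpos : 0 < T.card :=
    Finset.card_pos.mpr ⟨2, Finset.mem_filter.mpr
      ⟨Finset.mem_Icc.mpr ⟨by omega, by omega⟩, by norm_num⟩⟩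
  have hSpos : (0:ℝ) < (S.card : ℝ) := by
    have : 0 < S.card := hcard ▸ hTpos
    exact_mod_cast this
  -- dud case
  have key1 : m + 1 ≤ f a₂ →
      (∑ a₁ ∈ S, (rpsU m f a₁ a₂ : ℝ)) / (S.card : ℝ) = 1 := by
    intro hd
    have hse : ∀ a₁ ∈ S, (rpsU m f a₁ a₂ : ℝ) = 1 := by
      intro a₁ h1
      simp only [hSdef, Finset.mem_filter] at h1
      have hna₁ : ¬ (m + 1 ≤ f a₁) := by omega
      simp [rpsU, hna₁, hd]
    rw [Finset.sum_congr rfl hse, Finset.sum_const, nsmul_eq_mul, mul_one]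
    exact div_self (ne_of_gt hSpos)
  -- nondud case
  have key0 : f a₂ ≤ m →
      (∑ a₁ ∈ S, (rpsU m f a₁ a₂ : ℝ)) / (S.card : ℝ) = 0 := by
    intro h2
    have hna₂ : ¬ (m + 1 ≤ f a₂) := by omega
    have hterm : ∀ a₁ ∈ S, (rpsU m f a₁ a₂ : ℝ) =
        (if f a₁ % m = (f a₂ + 1) % m then (1:ℝ) else 0)
          - (if f a₂ % m = (f a₁ + 1) % m then (1:ℝ) else 0) := by
      intro a₁ h1
      simp only [hSdef, Finset.mem_filter] at h1
      have hna₁ : ¬ (m + 1 ≤ f a₁) := by omega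
      by_cases hP : f a₁ % m = (f a₂ + 1) % m
      · have hQ : ¬ f a₂ % m = (f a₁ + 1) % m := fun hQ => noPQ m (f a₁) (f a₂) hm hP hQ
        simp [rpsU, hna₁, hna₂, hP, hQ]
      · by_cases hQ : f a₂ % m = (f a₁ + 1) % m
        · simp [rpsU, hna₁, hna₂, hP, hQ]
        · simp [rpsU, hna₁, hna₂, hP, hQ]
    rw [Finset.sum_congr rfl hterm, Finset.sum_sub_distrib]
    have e1 : ∑ a₁ ∈ S, (if f a₁ % m = (f a₂ + 1) % m then (1:ℝ) else 0)
        = ∑ e ∈ T, (if e % m = (f a₂ + 1) % m then (1:ℝ) else 0) := by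
      rw [← himg, Finset.sum_image hinjS]
    have e2 : ∑ a₁ ∈ S, (if f a₂ % m = (f a₁ + 1) % m then (1:ℝ) else 0)
        = ∑ e ∈ T, (if f a₂ % m = (e + 1) % m then (1:ℝ) else 0) := by
      rw [← himg, Finset.sum_image hinjS]
    rw [e1, e2, Finset.sum_boole, Finset.sum_boole]
    have hcards : (T.filter (fun e => e % m = (f a₂ + 1) % m)).card
        = (T.filter (fun e => f a₂ % m = (e + 1) % m)).card := by
      rcases Nat.even_or_odd (f a₂) with hev | hod
      · -- f a₂ even: both empty by parity
        have hev2 : f a₂ % 2 = 0 := Nat.even_iff.mp hev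
        have h2d : (2:ℕ) ∣ m := by omega
        have hP0 : T.filter (fun e => e % m = (f a₂ + 1) % m) = ∅ := by
          rw [Finset.filter_eq_empty_iff]
          intro e he hmod
          simp only [hTdef, Finset.mem_filter, Finset.mem_Icc] at he
          have := congrArg (· % 2) hmod
          simp only [Nat.mod_mod_of_dvd _ h2d] at this
          omega
        have hQ0 : T.filter (fun e => f a₂ % m = (e + 1) % m) = ∅ := by
          rw [Finset.filter_eq_empty_iff]
          intro e he hmod
          simp only [hTdef, Finset.mem_filter, Finset.mem_Icc] at he
          have := congrArg (· % 2) hmod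
          simp only [Nat.mod_mod_of_dvd _ h2d] at this
          omega
        rw [hP0, hQ0]
      · have hod2 : f a₂ % 2 = 1 := Nat.odd_iff.mp hod
        have hlt : f a₂ < m := by omega
        have hPs : T.filter (fun e => e % m = (f a₂ + 1) % m) = {f a₂ + 1} := by
          ext e
          simp only [hTdef, Finset.mem_filter, Finset.mem_Icc, Finset.mem_singleton]
          constructor
          · rintro ⟨⟨⟨he1, he2⟩, hev⟩, hmod⟩
            exact mod_inj' m e (f a₂ + 1) (by omega) he1 he2 (by omega) (by omega) hmod
          · rintro rfl
            exact ⟨⟨⟨by omega, by omega⟩, by omega⟩, rfl⟩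
        have hQs : T.filter (fun e => f a₂ % m = (e + 1) % m)
            = {if f a₂ = 1 then m else f a₂ - 1} := by
          ext e
          simp only [hTdef, Finset.mem_filter, Finset.mem_Icc, Finset.mem_singleton]
          have hfm : f a₂ % m = f a₂ := Nat.mod_eq_of_lt hlt
          constructor
          · rintro ⟨⟨⟨he1, he2⟩, hev⟩, hmod⟩
            rw [hfm] at hmod
            rcases eq_or_lt_of_le he2 with rfl | he2'
            · rw [Nat.add_mod_left, Nat.mod_eq_of_lt (by omega)] at hmod
              simp [hmod]
            · have he3 : e + 1 < m := by
                rcases eq_or_lt_of_le (Nat.succ_le_of_lt he2') with h | h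
                · exfalso; rw [← h, Nat.mod_self] at hmod; omega
                · exact h
              rw [Nat.mod_eq_of_lt he3] at hmod
              have : ¬ f a₂ = 1 := by omega
              simp only [this, if_false]
              omega
          · intro he
            by_cases h1 : f a₂ = 1
            · rw [if_pos h1] at he
              subst he
              refine ⟨⟨⟨by omega, le_rfl⟩, hmeven⟩, ?_⟩
              rw [hfm, h1, Nat.add_mod_left, Nat.mod_eq_of_lt (by omega)]
            · rw [if_neg h1] at he
              subst he
              have hge2 : 2 ≤ f a₂ := by omega
              have he1 : f a₂ - 1 + 1 = f a₂ := by omega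
              refine ⟨⟨⟨by omega, by omega⟩, by omega⟩, ?_⟩
              rw [he1, hfm]
        rw [hPs, hQs]
        simp
    rw [hcards, sub_self, zero_div]
  refine ⟨?_, key0, key1⟩
  rcases le_or_gt (f a₂) m with h | h
  · rw [key0 h]
  · rw [key1 (by omega)]; norm_num
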